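/- Let H be a connected finite simple graph with k+1 vertices, and fix a total ordering e_1 < e_2 < ⋯ < e_m of its edge set E(H). Then Σ_{S ⊆ E(H) such that H_S is connected} (−1)^{|S|−k} equals the number of internal spanning trees of H, where H_S = (V(H), S), and a spanning tree T of H is internal if for every cycle of H all of whose edges except one edge e belong to T, the missing edge e is not the largest edge of that cycle. -/

import Mathlib

attribute [local instance 10] Classical.propDecidable

/-- A spanning tree `S ⊆ E(H)` is *internal* (w.r.t. a total ordering `ord` on edges) if
for every cycle of `H` all of whose edges except one edge `e` belong to `S`, the missing
edge `e` is not the largest edge of that cycle. -/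
def IsInternal {V : Type} (H : SimpleGraph V) (ord : LinearOrder (Sym2 V))
    (S : Finset (Sym2 V)) : Prop :=
  ∀ (a : V) (c : H.Walk a a), c.IsCycle →
    ∀ e ∈ c.edges, e ∉ S → (∀ e' ∈ c.edges, e' ≠ e → e' ∈ S) →
      ¬ (∀ e' ∈ c.edges, ord.le e' e)

namespace Stmt18Aux

open SimpleGraph Finset

variable {V : Type} [Fintype V]

lemma sym2_rep (e : Sym2 V) : ∃ u v : V, e = s(u, v) := by
  induction e using Sym2.ind with
  | _ u v => exact ⟨u, v, rfl⟩

/-- The endpoints of `e` are reachable in the graph with edge set `U`. -/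
def ReachEnds (U : Finset (Sym2 V)) (e : Sym2 V) : Prop :=
  ∀ a b : V, e = s(a, b) →
    (SimpleGraph.fromEdgeSet (↑U : Set (Sym2 V))).Reachable a b

lemma reachEnds_mono {U U' : Finset (Sym2 V)} (h : U ⊆ U') {e : Sym2 V}
    (hr : ReachEnds U e) : ReachEnds U' e := fun a b hab =>
  (hr a b hab).mono (SimpleGraph.fromEdgeSet_mono (Finset.coe_subset.mpr h))

lemma reachEnds_of_reach {U : Finset (Sym2 V)} {u v : V}
    (h : (SimpleGraph.fromEdgeSet (↑U : Set (Sym2 V))).Reachable u v) :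
    ReachEnds U s(u, v) := by
  intro a b hab
  rw [Sym2.eq_iff] at hab
  obtain ⟨rfl, rfl⟩ | ⟨rfl, rfl⟩ := hab
  · exact h
  · exact h.symm

lemma reach_replace {G₁ G₂ : SimpleGraph V} (h : ∀ a b, G₁.Adj a b → G₂.Reachable a b)
    {u v : V} (hr : G₁.Reachable u v) : G₂.Reachable u v := by
  obtain ⟨w⟩ := hr
  induction w with
  | nil => exact SimpleGraph.Reachable.refl _
  | cons ha _ ih => exact (h _ _ ha).trans ih

lemma reach_of_cycle {G : SimpleGraph V} {a u v : V} {c : G.Walk a a} (hc : c.IsCycle)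
    (he : s(u, v) ∈ c.edges) :
    (G \ SimpleGraph.fromEdgeSet {s(u, v)}).Reachable u v :=
  (SimpleGraph.adj_and_reachable_delete_edges_iff_exists_cycle.mpr ⟨a, c, hc, he⟩).2

section Ord

variable [ord : LinearOrder (Sym2 V)]

attribute [-instance] Sym2.instPartialOrder

noncomputable def krusk (S : Finset (Sym2 V)) : Finset (Sym2 V) :=
  S.filter (fun e => ¬ ReachEnds (S.filter (fun f => f < e)) e)

lemma krusk_subset (S : Finset (Sym2 V)) : krusk S ⊆ S := filter_subset _ _

lemma reach_of_mem_sdiff_krusk {S : Finset (Sym2 V)} {e : Sym2 V}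
    (heS : e ∈ S) (he : e ∉ krusk S) :
    ReachEnds (S.filter (fun f => f < e)) e := by
  by_contra h
  exact he (mem_filter.mpr ⟨heS, h⟩)

lemma key {S T : Finset (Sym2 V)}
    (h : ∀ e ∈ S, e ∉ T → ReachEnds (S.filter (fun f => f < e)) e)
    (hd : ∀ e ∈ S, ¬ e.IsDiag) :
    ∀ e, e ∈ S → ReachEnds (T.filter (fun f => f ≤ e)) e := by
  intro e
  induction e using WellFoundedLT.induction with
  | _ e ih =>
    intro heS a b hab
    by_cases heT : e ∈ T
    · refine SimpleGraph.Adj.reachable ?_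
      rw [SimpleGraph.fromEdgeSet_adj]
      constructor
      · rw [Finset.mem_coe, mem_filter]
        exact ⟨hab ▸ heT, hab ▸ le_refl e⟩
      · intro hab'
        exact hd e heS (by rw [hab, hab']; exact Sym2.mk_isDiag_iff.mpr rfl)
    · have hre := h e heS heT a b hab
      refine reach_replace ?_ hre
      intro x y hxy
      rw [SimpleGraph.fromEdgeSet_adj, Finset.mem_coe, mem_filter] at hxy
      obtain ⟨⟨hmemS, hlt⟩, _⟩ := hxy
      have hrec := ih s(x, y) hlt hmemS x y rfl
      refine hrec.mono (SimpleGraph.fromEdgeSet_mono (Finset.coe_subset.mpr ?_))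
      intro f hf
      rw [mem_filter] at hf ⊢
      exact ⟨hf.1, le_of_lt (lt_of_le_of_lt hf.2 hlt)⟩

lemma krusk_reach {S : Finset (Sym2 V)} (hd : ∀ e ∈ S, ¬ e.IsDiag) :
    ∀ e ∈ S, ReachEnds (krusk S) e := fun e heS =>
  reachEnds_mono (filter_subset _ _)
    (key (fun e heS heT => reach_of_mem_sdiff_krusk heS heT) hd e heS)

lemma krusk_connected {S : Finset (Sym2 V)} (hd : ∀ e ∈ S, ¬ e.IsDiag)
    (hS : (SimpleGraph.fromEdgeSet (↑S : Set (Sym2 V))).Connected) :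
    (SimpleGraph.fromEdgeSet (↑(krusk S) : Set (Sym2 V))).Connected := by
  rw [SimpleGraph.connected_iff] at hS ⊢
  refine ⟨fun u v => ?_, hS.2⟩
  refine reach_replace ?_ (hS.1 u v)
  intro a b hab
  rw [SimpleGraph.fromEdgeSet_adj, Finset.mem_coe] at hab
  exact krusk_reach hd _ hab.1 a b rfl

lemma krusk_acyclic (S : Finset (Sym2 V)) :
    (SimpleGraph.fromEdgeSet (↑(krusk S) : Set (Sym2 V))).IsAcyclic := by
  intro w c hc
  have hnodup := hc.edges_nodup
  have hFne : c.edges.toFinset.Nonempty := by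
    rw [List.toFinset_nonempty_iff]
    intro h0
    have h3 := hc.three_le_length
    rw [← SimpleGraph.Walk.length_edges, h0] at h3
    simp at h3
  set e := c.edges.toFinset.max' hFne with hedef
  have heE : e ∈ c.edges := by
    have := c.edges.toFinset.max'_mem hFne
    rwa [List.mem_toFinset] at this
  have hmax : ∀ f ∈ c.edges, f ≤ e := fun f hf =>
    c.edges.toFinset.le_max' f (List.mem_toFinset.mpr hf)
  have heK : e ∈ krusk S := by
    have h1 := c.edges_subset_edgeSet heE
    rw [SimpleGraph.edgeSet_fromEdgeSet] at h1
    exact_mod_cast h1.1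
  obtain ⟨u, v, huv⟩ := sym2_rep e
  rw [huv] at heE hmax heK
  -- transfer the cycle to the graph on its own edges
  have hsub : ∀ f ∈ c.edges, f ∈ (SimpleGraph.fromEdgeSet {f | f ∈ c.edges}).edgeSet := by
    intro f hf
    rw [SimpleGraph.edgeSet_fromEdgeSet]
    exact ⟨hf, SimpleGraph.not_isDiag_of_mem_edgeSet _ (c.edges_subset_edgeSet hf)⟩
  have hc' := hc.transfer hsub
  have heE' : s(u, v) ∈ (c.transfer _ hsub).edges := by
    rw [SimpleGraph.Walk.edges_transfer]
    exact heE
  have hreach := reach_of_cycle hc' heE'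
  have hmono : (SimpleGraph.fromEdgeSet {f | f ∈ c.edges} \ SimpleGraph.fromEdgeSet {s(u, v)})
      ≤ SimpleGraph.fromEdgeSet (↑(S.filter (fun f => f < s(u, v))) : Set (Sym2 V)) := by
    intro a b hab
    rw [SimpleGraph.sdiff_adj, SimpleGraph.fromEdgeSet_adj] at hab
    obtain ⟨⟨hmem, hne⟩, hnot⟩ := hab
    rw [SimpleGraph.fromEdgeSet_adj]
    refine ⟨?_, hne⟩
    have hfe : s(a, b) ≠ s(u, v) := by
      intro hh
      exact hnot ((SimpleGraph.fromEdgeSet_adj _).mpr ⟨by rw [hh]; rfl, hne⟩)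
    have hfK : s(a, b) ∈ krusk S := by
      have h1 := c.edges_subset_edgeSet hmem
      rw [SimpleGraph.edgeSet_fromEdgeSet] at h1
      exact_mod_cast h1.1
    rw [Finset.mem_coe, mem_filter]
    exact ⟨krusk_subset _ hfK, lt_of_le_of_ne (hmax _ hmem) hfe⟩
  have hRE : ReachEnds (S.filter (fun f => f < s(u, v))) s(u, v) :=
    reachEnds_of_reach (hreach.mono hmono)
  exact (mem_filter.mp heK).2 hRE

lemma acyclic_not_reach {T : Finset (Sym2 V)}
    (hac : (SimpleGraph.fromEdgeSet (↑T : Set (Sym2 V))).IsAcyclic)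
    {u v : V} (huv : u ≠ v) (heT : s(u, v) ∈ T)
    {U : Finset (Sym2 V)} (hU : U ⊆ T) (heU : s(u, v) ∉ U) :
    ¬ (SimpleGraph.fromEdgeSet (↑U : Set (Sym2 V))).Reachable u v := by
  have hadj : (SimpleGraph.fromEdgeSet (↑T : Set (Sym2 V))).Adj u v :=
    (SimpleGraph.fromEdgeSet_adj _).mpr ⟨heT, huv⟩
  have hb := SimpleGraph.isAcyclic_iff_forall_adj_isBridge.mp hac hadj
  rw [SimpleGraph.isBridge_iff] at hb
  intro hr
  apply hb
  refine hr.mono ?_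
  intro a b hab
  rw [SimpleGraph.fromEdgeSet_adj, Finset.mem_coe] at hab
  rw [SimpleGraph.deleteEdges, SimpleGraph.sdiff_adj]
  constructor
  · exact (SimpleGraph.fromEdgeSet_adj _).mpr ⟨Finset.mem_coe.mpr (hU hab.1), hab.2⟩
  · rw [SimpleGraph.fromEdgeSet_adj]
    rintro ⟨hmem, -⟩
    rw [Set.mem_singleton_iff] at hmem
    exact heU (hmem ▸ hab.1)

lemma krusk_tree_union {T A : Finset (Sym2 V)}
    (hd : ∀ e ∈ T ∪ A, ¬ e.IsDiag)
    (hac : (SimpleGraph.fromEdgeSet (↑T : Set (Sym2 V))).IsAcyclic)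
    (hA : ∀ e ∈ A, e ∉ T ∧ ReachEnds (T.filter (fun f => f < e)) e) :
    krusk (T ∪ A) = T := by
  have hkey : ∀ e ∈ T ∪ A, ReachEnds (T.filter (fun f => f ≤ e)) e := by
    refine key ?_ hd
    intro e heS heT
    have heA : e ∈ A := by
      rcases mem_union.mp heS with h | h
      · exact absurd h heT
      · exact h
    refine reachEnds_mono ?_ (hA e heA).2
    exact Finset.filter_subset_filter _ Finset.subset_union_left
  apply Finset.Subset.antisymm
  · intro e he
    have heS := krusk_subset _ he
    rcases mem_union.mp heS with h | h
    · exact h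
    · exfalso
      have h2 : ReachEnds ((T ∪ A).filter (fun f => f < e)) e :=
        reachEnds_mono (Finset.filter_subset_filter _ Finset.subset_union_left) (hA e h).2
      exact (mem_filter.mp he).2 h2
  · intro e heT
    have heS : e ∈ T ∪ A := mem_union_left _ heT
    rw [krusk, mem_filter]
    refine ⟨heS, ?_⟩
    intro hre
    obtain ⟨u, v, huv⟩ := sym2_rep e
    have huvne : u ≠ v := by
      intro h
      exact hd e heS (by rw [huv, h]; exact Sym2.mk_isDiag_iff.mpr rfl)
    have hr1 := hre u v huv
    have hr2 : (SimpleGraph.fromEdgeSet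
        (↑(T.filter (fun f => f < e)) : Set (Sym2 V))).Reachable u v := by
      refine reach_replace ?_ hr1
      intro a b hab
      rw [SimpleGraph.fromEdgeSet_adj, Finset.mem_coe, mem_filter] at hab
      obtain ⟨⟨hmem, hlt⟩, _⟩ := hab
      refine (hkey s(a, b) hmem a b rfl).mono
        (SimpleGraph.fromEdgeSet_mono (Finset.coe_subset.mpr ?_))
      intro f hf
      rw [mem_filter] at hf ⊢
      exact ⟨hf.1, lt_of_le_of_lt hf.2 hlt⟩
    refine acyclic_not_reach hac huvne (huv ▸ heT) (filter_subset _ _) ?_ hr2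
    rw [mem_filter]
    rintro ⟨-, hlt⟩
    rw [huv] at hlt
    exact lt_irrefl _ hlt

noncomputable def EAset (H : SimpleGraph V) (T : Finset (Sym2 V)) : Finset (Sym2 V) :=
  (H.edgeFinset \ T).filter (fun e => ReachEnds (T.filter (fun f => f < e)) e)

lemma mem_EAset_of_sdiff_krusk {H : SimpleGraph V} {S : Finset (Sym2 V)}
    (hSE : S ⊆ H.edgeFinset) {e : Sym2 V} (heS : e ∈ S) (he : e ∉ krusk S)
    (hd : ∀ e ∈ S, ¬ e.IsDiag) :
    e ∈ EAset H (krusk S) := by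
  rw [EAset, mem_filter, mem_sdiff]
  refine ⟨⟨hSE heS, he⟩, ?_⟩
  have h1 := key (T := krusk S) (fun e heS heT => reach_of_mem_sdiff_krusk heS heT) hd e heS
  refine reachEnds_mono ?_ h1
  intro f hf
  rw [mem_filter] at hf ⊢
  exact ⟨hf.1, lt_of_le_of_ne hf.2 (by rintro rfl; exact he hf.1)⟩

lemma EA_empty_iff_internal {H : SimpleGraph V}
    {T : Finset (Sym2 V)} (hT : T ⊆ H.edgeFinset) :
    EAset H T = ∅ ↔ IsInternal H ord T := by
  constructor
  · -- EA empty → internal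
    intro hEA a c hc e he heT hrest hall
    obtain ⟨u, v, huv⟩ := sym2_rep e
    rw [huv] at he heT hrest hall
    have heH : s(u, v) ∈ H.edgeFinset := by
      rw [SimpleGraph.mem_edgeFinset]
      exact c.edges_subset_edgeSet he
    have hsub : ∀ f ∈ c.edges, f ∈ (SimpleGraph.fromEdgeSet {f | f ∈ c.edges}).edgeSet := by
      intro f hf
      rw [SimpleGraph.edgeSet_fromEdgeSet]
      exact ⟨hf, SimpleGraph.not_isDiag_of_mem_edgeSet _ (c.edges_subset_edgeSet hf)⟩
    have hc' := hc.transfer hsub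
    have heE' : s(u, v) ∈ (c.transfer _ hsub).edges := by
      rw [SimpleGraph.Walk.edges_transfer]; exact he
    have hreach := reach_of_cycle hc' heE'
    have hmono : (SimpleGraph.fromEdgeSet {f | f ∈ c.edges} \ SimpleGraph.fromEdgeSet {s(u, v)})
        ≤ SimpleGraph.fromEdgeSet (↑(T.filter (fun f => f < s(u, v))) : Set (Sym2 V)) := by
      intro x y hxy
      rw [SimpleGraph.sdiff_adj, SimpleGraph.fromEdgeSet_adj] at hxy
      obtain ⟨⟨hmem, hne⟩, hnot⟩ := hxy
      rw [SimpleGraph.fromEdgeSet_adj]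
      refine ⟨?_, hne⟩
      have hfe : s(x, y) ≠ s(u, v) := by
        intro hh
        exact hnot ((SimpleGraph.fromEdgeSet_adj _).mpr ⟨by rw [hh]; rfl, hne⟩)
      rw [Finset.mem_coe, mem_filter]
      exact ⟨hrest _ hmem hfe, lt_of_le_of_ne (hall _ hmem) hfe⟩
    have hmem : s(u, v) ∈ EAset H T := by
      rw [EAset, mem_filter, mem_sdiff]
      exact ⟨⟨heH, heT⟩, reachEnds_of_reach (hreach.mono hmono)⟩
    rw [hEA] at hmem
    exact absurd hmem (Finset.notMem_empty _)
  · -- internal → EA empty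
    intro hint
    rw [Finset.eq_empty_iff_forall_notMem]
    intro e he
    obtain ⟨hme, hre⟩ := mem_filter.mp he
    obtain ⟨heH, heT⟩ := mem_sdiff.mp hme
    obtain ⟨u, v, huv⟩ := sym2_rep e
    rw [huv] at heH heT hre
    have huvH : H.Adj u v := by
      rw [← SimpleGraph.mem_edgeSet]
      exact SimpleGraph.mem_edgeFinset.mp heH
    have hne : u ≠ v := huvH.ne
    have hr := hre u v rfl
    set U : Finset (Sym2 V) := insert s(u, v) (T.filter (fun f => f < s(u, v))) with hU
    have hadj : (SimpleGraph.fromEdgeSet (↑U : Set (Sym2 V))).Adj u v :=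
      (SimpleGraph.fromEdgeSet_adj _).mpr ⟨by simp [hU], hne⟩
    have hrr : (SimpleGraph.fromEdgeSet (↑U : Set (Sym2 V))
        \ SimpleGraph.fromEdgeSet {s(u, v)}).Reachable u v := by
      refine hr.mono ?_
      intro x y hxy
      rw [SimpleGraph.fromEdgeSet_adj, Finset.mem_coe, mem_filter] at hxy
      obtain ⟨⟨hmem, hlt⟩, hnexy⟩ := hxy
      rw [SimpleGraph.sdiff_adj]
      constructor
      · exact (SimpleGraph.fromEdgeSet_adj _).mpr
          ⟨Finset.mem_coe.mpr (by simp [hU, hmem, hlt]), hnexy⟩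
      · rw [SimpleGraph.fromEdgeSet_adj]
        rintro ⟨hm, -⟩
        rw [Set.mem_singleton_iff] at hm
        rw [hm] at hlt
        exact lt_irrefl _ hlt
    obtain ⟨w, p, hp, hep⟩ :=
      SimpleGraph.adj_and_reachable_delete_edges_iff_exists_cycle.mp ⟨hadj, hrr⟩
    have hedges : ∀ f ∈ p.edges, f ∈ U := by
      intro f hf
      have h1 := p.edges_subset_edgeSet hf
      rw [SimpleGraph.edgeSet_fromEdgeSet] at h1
      exact_mod_cast h1.1
    have hsubH : ∀ f ∈ p.edges, f ∈ H.edgeSet := by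
      intro f hf
      have := hedges f hf
      rw [hU, Finset.mem_insert] at this
      rcases this with rfl | hmem
      · exact SimpleGraph.mem_edgeFinset.mp heH
      · exact SimpleGraph.mem_edgeFinset.mp (hT (mem_filter.mp hmem).1)
    have hp' := hp.transfer hsubH
    refine hint w (p.transfer H hsubH) hp' s(u, v) ?_ heT ?_ ?_
    · rw [SimpleGraph.Walk.edges_transfer]; exact hep
    · intro f hf hfne
      rw [SimpleGraph.Walk.edges_transfer] at hf
      have := hedges f hf
      rw [hU, Finset.mem_insert] at this
      rcases this with rfl | hmem
      · exact absurd rfl hfne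
      · exact (mem_filter.mp hmem).1
    · intro f hf
      rw [SimpleGraph.Walk.edges_transfer] at hf
      have := hedges f hf
      rw [hU, Finset.mem_insert] at this
      rcases this with rfl | hmem
      · exact le_refl _
      · exact le_of_lt (mem_filter.mp hmem).2

end Ord

lemma edgeFinset_fromEdgeSet_eq {T : Finset (Sym2 V)} (hd : ∀ e ∈ T, ¬ e.IsDiag) :
    (SimpleGraph.fromEdgeSet (↑T : Set (Sym2 V))).edgeFinset = T := by
  ext e
  rw [SimpleGraph.mem_edgeFinset, SimpleGraph.edgeSet_fromEdgeSet]
  constructor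
  · rintro ⟨h, -⟩
    exact_mod_cast h
  · intro h
    exact ⟨Finset.mem_coe.mpr h, hd e h⟩

lemma tree_card {T : Finset (Sym2 V)} (hd : ∀ e ∈ T, ¬ e.IsDiag) {k : ℕ}
    (hcard : Fintype.card V = k + 1)
    (ht : (SimpleGraph.fromEdgeSet (↑T : Set (Sym2 V))).IsTree) : T.card = k := by
  have h1 := ht.card_edgeFinset
  rw [edgeFinset_fromEdgeSet_eq hd] at h1
  omega

end Stmt18Aux

attribute [-instance] Sym2.instPartialOrder

open Stmt18Aux Finset SimpleGraph in
theorem stmt18 {V : Type} [Fintype V] (H : SimpleGraph V) (k : ℕ)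
    (hcard : Fintype.card V = k + 1) (hconn : H.Connected)
    (ord : LinearOrder (Sym2 V)) :
    ∑ S ∈ H.edgeFinset.powerset.filter
        (fun S : Finset (Sym2 V) => (SimpleGraph.fromEdgeSet (↑S : Set (Sym2 V))).Connected),
      (-1 : ℚ) ^ ((S.card : ℤ) - (k : ℤ)) =
    ((H.edgeFinset.powerset.filter
        (fun S : Finset (Sym2 V) => (SimpleGraph.fromEdgeSet (↑S : Set (Sym2 V))).IsTree ∧
          IsInternal H ord S)).card : ℚ) := by
  letI := ord
  have hdE : ∀ e ∈ H.edgeFinset, ¬ e.IsDiag := fun e he =>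
    H.not_isDiag_of_mem_edgeSet (mem_edgeFinset.mp he)
  have hbij :
      ∑ S ∈ H.edgeFinset.powerset.filter
          (fun S : Finset (Sym2 V) => (SimpleGraph.fromEdgeSet (↑S : Set (Sym2 V))).Connected),
        (-1 : ℚ) ^ ((S.card : ℤ) - (k : ℤ)) =
      ∑ p ∈ (H.edgeFinset.powerset.filter
          (fun T : Finset (Sym2 V) => (SimpleGraph.fromEdgeSet (↑T : Set (Sym2 V))).IsTree)).sigma
          (fun T => (EAset H T).powerset),
        (-1 : ℚ) ^ (p.2.card) := by
    refine Finset.sum_nbij' (i := fun S => ⟨krusk S, S \ krusk S⟩)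
      (j := fun p => p.1 ∪ p.2) ?_ ?_ ?_ ?_ ?_
    · -- hi
      intro S hS
      rw [mem_filter, mem_powerset] at hS
      obtain ⟨hSE, hSc⟩ := hS
      have hdS : ∀ e ∈ S, ¬ e.IsDiag := fun e he => hdE e (hSE he)
      rw [mem_sigma]
      constructor
      · rw [mem_filter, mem_powerset]
        exact ⟨(krusk_subset S).trans hSE, ⟨krusk_connected hdS hSc, krusk_acyclic S⟩⟩
      · rw [mem_powerset]
        intro e he
        rw [mem_sdiff] at he
        exact mem_EAset_of_sdiff_krusk hSE he.1 he.2 hdS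
    · -- hj
      rintro ⟨T, A⟩ hp
      rw [mem_sigma, mem_filter, mem_powerset, mem_powerset] at hp
      obtain ⟨⟨hTE, hTt⟩, hA⟩ := hp
      rw [mem_filter, mem_powerset]
      constructor
      · refine union_subset hTE ?_
        intro e he
        exact (mem_sdiff.mp (mem_filter.mp (hA he)).1).1
      · exact hTt.isConnected.mono
          (SimpleGraph.fromEdgeSet_mono (Finset.coe_subset.mpr Finset.subset_union_left))
    · -- left inv
      intro S _
      exact union_sdiff_of_subset (krusk_subset S)
    · -- right inv
      rintro ⟨T, A⟩ hp
      rw [mem_sigma, mem_filter, mem_powerset, mem_powerset] at hp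
      obtain ⟨⟨hTE, hTt⟩, hA⟩ := hp
      have hAprop : ∀ e ∈ A, e ∉ T ∧ ReachEnds (T.filter (fun f => f < e)) e := by
        intro e he
        have h1 := mem_filter.mp (hA he)
        exact ⟨(mem_sdiff.mp h1.1).2, h1.2⟩
      have hd2 : ∀ e ∈ T ∪ A, ¬ e.IsDiag := by
        intro e he
        rcases mem_union.mp he with h | h
        · exact hdE e (hTE h)
        · exact hdE e (mem_sdiff.mp (mem_filter.mp (hA h)).1).1
      have hk : krusk (T ∪ A) = T := krusk_tree_union hd2 hTt.IsAcyclic hAprop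
      have hdisj : Disjoint T A := by
        rw [Finset.disjoint_left]
        intro e heT heA
        exact (hAprop e heA).1 heT
      have hk2 : (T ∪ A) \ krusk (T ∪ A) = A := by
        rw [hk]
        exact union_sdiff_cancel_left hdisj
      exact Sigma.ext hk (heq_of_eq hk2)
    · -- values
      intro S hS
      rw [mem_filter, mem_powerset] at hS
      obtain ⟨hSE, hSc⟩ := hS
      have hdS : ∀ e ∈ S, ¬ e.IsDiag := fun e he => hdE e (hSE he)
      have htree : (SimpleGraph.fromEdgeSet (↑(krusk S) : Set (Sym2 V))).IsTree :=
        ⟨krusk_connected hdS hSc, krusk_acyclic S⟩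
      have hck : (krusk S).card = k :=
        tree_card (fun e he => hdS e (krusk_subset S he)) hcard htree
      have hle : k ≤ S.card := hck ▸ card_le_card (krusk_subset S)
      have hsd : (S \ krusk S).card = S.card - k := by
        rw [card_sdiff_of_subset (krusk_subset S), hck]
      have hexp : ((S.card : ℤ) - (k : ℤ)) = (((S \ krusk S).card : ℕ) : ℤ) := by
        rw [hsd]
        omega
      rw [hexp, zpow_natCast]
  rw [hbij, Finset.sum_sigma]
  have hinner : ∀ T ∈ H.edgeFinset.powerset.filter
      (fun T : Finset (Sym2 V) => (SimpleGraph.fromEdgeSet (↑T : Set (Sym2 V))).IsTree),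
      (∑ A ∈ (EAset H T).powerset, (-1 : ℚ) ^ A.card)
        = if EAset H T = ∅ then (1 : ℚ) else 0 := by
    intro T _
    have h0 := Finset.sum_powerset_neg_one_pow_card (x := EAset H T)
    have h1 : ∑ A ∈ (EAset H T).powerset, (-1 : ℚ) ^ A.card
        = ((∑ A ∈ (EAset H T).powerset, (-1 : ℤ) ^ A.card : ℤ) : ℚ) := by
      push_cast
      rfl
    rw [h1, h0]
    split_ifs <;> simp
  rw [Finset.sum_congr rfl hinner, Finset.sum_boole]
  congr 1
  have hsets : (H.edgeFinset.powerset.filter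
      (fun T : Finset (Sym2 V) => (SimpleGraph.fromEdgeSet (↑T : Set (Sym2 V))).IsTree)).filter
        (fun T => EAset H T = ∅)
      = H.edgeFinset.powerset.filter
        (fun S : Finset (Sym2 V) => (SimpleGraph.fromEdgeSet (↑S : Set (Sym2 V))).IsTree ∧
          IsInternal H ord S) := by
    ext T
    simp only [mem_filter, mem_powerset, and_assoc]
    constructor
    · rintro ⟨h1, h2, h3⟩
      exact ⟨h1, h2, (EA_empty_iff_internal h1).mp h3⟩
    · rintro ⟨h1, h2, h3⟩
      exact ⟨h1, h2, (EA_empty_iff_internal h1).mpr h3⟩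
  rw [hsets]
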